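/- Let G be a finitely generated group acting on a tree T without inversions such that every element of G fixes some vertex of T. Then there is a single vertex of T fixed by all of G. -/

import Mathlib

namespace TreeFixAux

open SimpleGraph Walk

attribute [local instance] Classical.decEq

variable {V : Type*} {G : Type*} [Group G] [MulAction G V] {T : SimpleGraph V}

/-- The unique path between two vertices of a tree. -/
noncomputable def pth (hT : T.IsTree) (a b : V) : T.Walk a b :=
  (hT.existsUnique_path a b).exists.choose

lemma pth_isPath (hT : T.IsTree) (a b : V) : (pth hT a b).IsPath :=
  (hT.existsUnique_path a b).exists.choose_spec

lemma path_eq (hT : T.IsTree) {a b : V} {p q : T.Walk a b}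
    (hp : p.IsPath) (hq : q.IsPath) : p = q := by
  obtain ⟨r, -, hr⟩ := hT.existsUnique_path a b
  rw [hr p hp, hr q hq]

lemma eq_pth (hT : T.IsTree) {a b : V} {p : T.Walk a b} (hp : p.IsPath) :
    p = pth hT a b := path_eq hT hp (pth_isPath hT a b)

section hom

variable (hact : ∀ (g : G) (u v : V), T.Adj u v → T.Adj (g • u) (g • v))

/-- The graph homomorphism given by the action of `g`. -/
@[reducible] def acthom (g : G) : T →g T where
  toFun := fun v => g • v
  map_rel' := fun h => hact g _ _ h

lemma acthom_injective (g : G) : Function.Injective (acthom (T := T) hact g) :=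
  MulAction.injective g

lemma getVert_map (f : T →g T) {a b : V} (p : T.Walk a b) (i : ℕ) :
    (p.map f).getVert i = f (p.getVert i) := by
  induction p generalizing i with
  | nil => simp [getVert]
  | cons h p ih =>
    cases i with
    | zero => simp [getVert]
    | succ n => simpa using ih n

end hom

lemma getVert_copy' {a b a' b' : V} (p : T.Walk a b) (ha : a = a') (hb : b = b') (i : ℕ) :
    (p.copy ha hb).getVert i = p.getVert i := by
  subst ha; subst hb; rfl

lemma list_map_eq_self {f : V → V} : ∀ (l : List V), l.map f = l → ∀ x ∈ l, f x = x := by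
  intro l
  induction l with
  | nil => simp
  | cons a l ih =>
    intro h x hx
    simp only [List.map_cons, List.cons.injEq] at h
    rcases List.mem_cons.mp hx with rfl | hx
    · exact h.1
    · exact ih h.2 x hx

/-- If `g` fixes `a` and `b`, it fixes every vertex of the path from `a` to `b`. -/
lemma fixed_on_path (hT : T.IsTree)
    (hact : ∀ (g : G) (u v : V), T.Adj u v → T.Adj (g • u) (g • v))
    (g : G) {a b : V} (ha : g • a = a) (hb : g • b = b) :
    ∀ z ∈ (pth hT a b).support, g • z = z := by
  set p := pth hT a b with hp
  have hmap : ((p.map (acthom hact g)).copy ha hb).IsPath := by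
    rw [isPath_copy]
    exact Walk.map_isPath_of_injective (acthom_injective hact g) (pth_isPath hT a b)
  have heq : (p.map (acthom hact g)).copy ha hb = p := path_eq hT hmap (pth_isPath hT a b)
  have hsup : p.support.map (fun v => g • v) = p.support := by
    conv_rhs => rw [← heq]
    rw [support_copy, Walk.support_map]
    rfl
  exact list_map_eq_self p.support hsup

/-- Along a walk from a vertex in `S` to a vertex not in `S`, there is an edge
leaving `S`. -/
lemma exists_exit_pair (S : Set V) :
    ∀ {a c : V} (W : T.Walk a c), a ∈ S → c ∉ S →
      ∃ m m', T.Adj m m' ∧ m ∈ W.support ∧ m' ∈ W.support ∧ m ∈ S ∧ m' ∉ S := by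
  intro a c W
  induction W with
  | nil => intro ha hc; exact absurd ha hc
  | @cons a x c h W ih =>
    intro ha hc
    by_cases hx : x ∈ S
    · obtain ⟨m, m', hadj, hm, hm', hmS, hm'S⟩ := ih hx hc
      exact ⟨m, m', hadj, by simp [hm], by simp [hm'], hmS, hm'S⟩
    · exact ⟨a, x, h, by simp, by simp [start_mem_support], ha, hx⟩

/-- The switching lemma: if a path from `b` to `m` avoids `m'`, `m` is adjacent
to `m'`, and `m'` lies on the path from `b` to `c`, then so does `m`. -/
lemma mem_of_adj (hT : T.IsTree) {b m m' c : V}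
    (q : T.Walk b m) (hq : q.IsPath) (hadj : T.Adj m m') (hm'q : m' ∉ q.support)
    (r : T.Walk b c) (hr : r.IsPath) (hm'r : m' ∈ r.support) : m ∈ r.support := by
  have hq' : (q.concat hadj).IsPath := by
    rw [← isPath_reverse_iff, reverse_concat]
    rw [cons_isPath_iff, isPath_reverse_iff]
    exact ⟨hq, by rwa [support_reverse, List.mem_reverse]⟩
  have hr' : (r.takeUntil m' hm'r).IsPath := hr.takeUntil hm'r
  have heq : q.concat hadj = r.takeUntil m' hm'r := path_eq hT hq' hr'
  have hm : m ∈ (q.concat hadj).support := by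
    rw [concat_eq_append]
    rw [mem_support_append_iff]
    exact Or.inr (start_mem_support _)
  rw [heq] at hm
  exact support_takeUntil_subset _ hm'r hm

/-- Every vertex of the path `a → c` lies on path `a → b` or on path `b → c`. -/
lemma support_subset_union (hT : T.IsTree) (a b c : V) :
    ∀ z ∈ (pth hT a c).support, z ∈ (pth hT a b).support ∨ z ∈ (pth hT b c).support := by
  intro z hz
  set W : T.Walk a c := (pth hT a b).append (pth hT b c) with hW
  have hbp : W.bypass = pth hT a c := eq_pth hT W.bypass_isPath
  have : z ∈ W.support := by
    apply W.support_bypass_subset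
    rw [hbp]
    exact hz
  rw [hW, mem_support_append_iff] at this
  exact this

/-- Median: the three paths between `a`, `b`, `c` have a common vertex. -/
lemma median (hT : T.IsTree) (a b c : V) :
    ∃ m, m ∈ (pth hT a b).support ∧ m ∈ (pth hT b c).support ∧ m ∈ (pth hT a c).support := by
  by_cases hc : c ∈ (pth hT a b).support
  · exact ⟨c, hc, end_mem_support _, end_mem_support _⟩
  obtain ⟨m, m', hadj, hm3, hm'3, hm1, hm'1⟩ :=
    exists_exit_pair {v | v ∈ (pth hT a b).support} (pth hT a c)
      (start_mem_support _) hc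
  have hm'2 : m' ∈ (pth hT b c).support := by
    rcases support_subset_union hT a b c m' hm'3 with h | h
    · exact absurd h hm'1
    · exact h
  by_cases hm2 : m ∈ (pth hT b c).support
  · exact ⟨m, hm1, hm2, hm3⟩
  · exfalso
    -- q : path from b to m inside the path a→b (reversed, then truncated)
    have hmrev : m ∈ (pth hT a b).reverse.support := by
      rw [support_reverse, List.mem_reverse]; exact hm1
    set q : T.Walk b m := (pth hT a b).reverse.takeUntil m hmrev with hq
    have hqpath : q.IsPath := ((pth_isPath hT a b).reverse).takeUntil hmrev
    have hm'q : m' ∉ q.support := by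
      intro hmem
      apply hm'1
      have := support_takeUntil_subset _ hmrev hmem
      rw [support_reverse, List.mem_reverse] at this
      exact this
    exact hm2 (mem_of_adj hT q hqpath hadj hm'q (pth hT b c) (pth_isPath hT b c) hm'2)

/-- From a path `p : w → a` with `g • a = a`, extract the first `g`-fixed vertex. -/
lemma first_fixed (g : G) :
    ∀ {w a : V} (p : T.Walk w a), p.IsPath → g • a = a →
      ∃ (y : V) (q : T.Walk w y), q.IsPath ∧ g • y = y ∧
        (∀ z ∈ q.support, g • z = z → z = y) ∧ q.support ⊆ p.support := by
  intro w a p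
  induction p with
  | nil =>
    intro _ ha
    exact ⟨_, Walk.nil, IsPath.nil, ha, by simp, by simp⟩
  | @cons w x a h p ih =>
    intro hp ha
    rw [cons_isPath_iff] at hp
    by_cases hgw : g • w = w
    · exact ⟨w, Walk.nil, IsPath.nil, hgw, by simp, by simp⟩
    · obtain ⟨y, q', hq', hy, hfix, hsub⟩ := ih hp.1 ha
      refine ⟨y, Walk.cons h q', ?_, hy, ?_, ?_⟩
      · rw [cons_isPath_iff]
        exact ⟨hq', fun hmem => hp.2 (hsub hmem)⟩
      · intro z hz hgz
        rw [support_cons, List.mem_cons] at hz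
        rcases hz with rfl | hz
        · exact absurd hgz hgw
        · exact hfix z hz hgz
      · intro z hz
        rw [support_cons, List.mem_cons] at hz
        rw [support_cons, List.mem_cons]
        rcases hz with rfl | hz
        · exact Or.inl rfl
        · exact Or.inr (hsub hz)

lemma getVert_one_eq_takeUntil (hT : T.IsTree) {u v z : V} (p : T.Walk u v)
    (h : z ∈ p.support) (hz : z ≠ u) :
    p.getVert 1 = (p.takeUntil z h).getVert 1 := by
  have hlen : (p.takeUntil z h).length ≠ 0 := by
    intro h0
    exact hz (eq_of_length_eq_zero h0).symm
  conv_lhs => rw [← take_spec p h]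
  rw [getVert_append]
  split
  · rfl
  · rename_i hlt
    push_neg at hlt
    have h1 : (p.takeUntil z h).length = 1 := le_antisymm hlt (Nat.one_le_iff_ne_zero.2 hlen)
    rw [h1]
    simp only [Nat.sub_self, getVert_zero]
    conv_rhs => rw [← h1]
    rw [getVert_length]

/-- Two paths out of `y` sharing a vertex other than `y` have the same second vertex. -/
lemma same_second_vertex (hT : T.IsTree) {y b1 b2 z : V}
    (q1 : T.Walk y b1) (hq1 : q1.IsPath) (q2 : T.Walk y b2) (hq2 : q2.IsPath)
    (h1 : z ∈ q1.support) (h2 : z ∈ q2.support) (hz : z ≠ y) :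
    q1.getVert 1 = q2.getVert 1 := by
  have e1 := getVert_one_eq_takeUntil hT q1 h1 hz
  have e2 := getVert_one_eq_takeUntil hT q2 h2 hz
  have : q1.takeUntil z h1 = q2.takeUntil z h2 :=
    path_eq hT (hq1.takeUntil h1) (hq2.takeUntil h2)
  rw [e1, e2, this]

lemma isPath_append' :
    ∀ {u v : V} (p : T.Walk u v), p.IsPath → ∀ {w : V} (q : T.Walk v w), q.IsPath →
      (∀ z, z ∈ p.support → z ∈ q.support → z = v) → (p.append q).IsPath := by
  intro u v p
  induction p with
  | nil =>
    intro _ w q hq _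
    simpa using hq
  | @cons u x v hadj p ih =>
    intro hp w q hq h
    rw [cons_isPath_iff] at hp
    rw [cons_append, cons_isPath_iff]
    constructor
    · exact ih hp.1 q hq (fun z hz1 hz2 => h z (by simp [hz1]) hz2)
    · rw [mem_support_append_iff]
      rintro (hu | hu)
      · exact hp.2 hu
      · have : u = v := h u (by simp) hu
        exact hp.2 (this ▸ end_mem_support p)

/-- For any elliptic `e` and vertex `w`, there is a path from `w` to `e • w`
of even length `2L` whose midpoint (at index `L`) is fixed by `e`. -/
lemma key_path (hT : T.IsTree)
    (hact : ∀ (g : G) (u v : V), T.Adj u v → T.Adj (g • u) (g • v))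
    (e : G) {a : V} (ha : e • a = a) (w : V) :
    ∃ (L : ℕ) (W : T.Walk w (e • w)), W.IsPath ∧ W.length = 2 * L ∧
      e • (W.getVert L) = W.getVert L := by
  obtain ⟨y, q, hq, hy, hfix, -⟩ :=
    first_fixed e (pth hT w a) (pth_isPath hT w a) ha
  set q2 : T.Walk y (e • w) := ((q.reverse).map (acthom hact e)).copy hy rfl with hq2def
  have hq2path : q2.IsPath := by
    rw [hq2def, isPath_copy]
    exact Walk.map_isPath_of_injective (acthom_injective hact e) hq.reverse
  have hq2support : ∀ z ∈ q2.support, ∃ z' ∈ q.support, e • z' = z := by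
    intro z hz
    rw [hq2def, support_copy, Walk.support_map] at hz
    obtain ⟨z', hz', hez⟩ := List.mem_map.mp hz
    rw [support_reverse, List.mem_reverse] at hz'
    exact ⟨z', hz', hez⟩
  -- intersection of supports is {y}
  have hinter : ∀ z, z ∈ q.support → z ∈ q2.support → z = y := by
    intro z hz1 hz2
    by_contra hzy
    have hz1' : z ∈ q.reverse.support := by
      rw [support_reverse, List.mem_reverse]; exact hz1
    have hsecond := same_second_vertex hT q.reverse hq.reverse q2 hq2path hz1' hz2 hzy
    -- the second vertex of q.reverse is fixed by e
    have hnn : q.reverse.length ≠ 0 := by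
      intro h0
      have := eq_of_length_eq_zero h0
      subst this
      apply hzy
      have : q.reverse.support = [y] := by
        cases hq' : q.reverse with
        | nil => simp
        | cons h p =>
          exfalso
          rw [hq'] at h0
          simp [length_cons] at h0
      rw [this] at hz1'
      simpa using hz1'
    have hu1fix : e • (q.reverse.getVert 1) = q.reverse.getVert 1 := by
      have h2 : q2.getVert 1 = e • (q.reverse.getVert 1) := by
        rw [hq2def, getVert_copy', getVert_map]
        rfl
      rw [← hsecond] at h2
      exact h2.symm
    have hu1mem : q.reverse.getVert 1 ∈ q.reverse.support := by
      rw [mem_support_iff_exists_getVert]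
      exact ⟨1, rfl, Nat.one_le_iff_ne_zero.2 (by simpa using hnn)⟩
    have hu1memq : q.reverse.getVert 1 ∈ q.support := by
      rw [support_reverse, List.mem_reverse] at hu1mem; exact hu1mem
    have hu1y : q.reverse.getVert 1 = y := hfix _ hu1memq hu1fix
    -- but the second vertex differs from y since q.reverse is a path of positive length
    cases hq' : q.reverse with
    | nil =>
      rw [hq'] at hnn; simp at hnn
    | cons hadj p =>
      have hv0 : q.reverse.getVert 1 = p.getVert 0 := by rw [hq', getVert_cons_succ]
      rw [getVert_zero] at hv0
      have hyp : y ∉ p.support := by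
        have := hq.reverse
        rw [hq', cons_isPath_iff] at this
        exact this.2
      apply hyp
      rw [← hu1y, hv0]
      exact start_mem_support p
  refine ⟨q.length, q.append q2, ?_, ?_, ?_⟩
  · exact isPath_append' q hq q2 hq2path hinter
  · rw [length_append, hq2def, length_copy, length_map, length_reverse]
    ring
  · have : (q.append q2).getVert q.length = y := by
      rw [getVert_append]
      simp
    rw [this]
    exact hy

/-- If `g`, `h` and `g * h` all fix vertices, then `g` and `h` have a common
fixed vertex. -/
lemma pair_fix (hT : T.IsTree)
    (hact : ∀ (g : G) (u v : V), T.Adj u v → T.Adj (g • u) (g • v))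
    (g h : G) (hg : ∃ a : V, g • a = a) (hh : ∃ b : V, h • b = b)
    (hgh : ∃ w : V, (g * h) • w = w) : ∃ y : V, g • y = y ∧ h • y = y := by
  obtain ⟨a, ha⟩ := hg
  obtain ⟨b, hb⟩ := hh
  obtain ⟨w, hw⟩ := hgh
  have hginv : g⁻¹ • a = a := by
    conv_lhs => rw [← ha]
    rw [inv_smul_smul]
  have hweq : h • w = g⁻¹ • w := by
    rw [mul_smul] at hw
    exact (inv_smul_eq_iff.mpr hw.symm).symm
  obtain ⟨L1, W1, hW1, hlen1, hfix1⟩ := key_path hT hact g⁻¹ hginv w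
  obtain ⟨L2, W2, hW2, hlen2, hfix2⟩ := key_path hT hact h hb w
  set W2' : T.Walk w (g⁻¹ • w) := W2.copy rfl hweq with hW2'def
  have hW2'path : W2'.IsPath := by rw [hW2'def, isPath_copy]; exact hW2
  have heq : W1 = W2' := path_eq hT hW1 hW2'path
  have hlen : 2 * L1 = 2 * L2 := by
    rw [← hlen1, ← hlen2, heq, hW2'def, length_copy]
  have hL : L1 = L2 := by omega
  have hvert : W1.getVert L1 = W2.getVert L2 := by
    rw [heq, hW2'def, getVert_copy', hL]
  refine ⟨W1.getVert L1, ?_, ?_⟩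
  · have h' : g • (g⁻¹ • W1.getVert L1) = W1.getVert L1 := smul_inv_smul g _
    rw [hfix1] at h'
    exact h'
  · rw [hvert]; exact hfix2

/-- A nonempty, path-closed subset of a tree. -/
def Sub (hT : T.IsTree) (S : Set V) : Prop :=
  S.Nonempty ∧ ∀ a ∈ S, ∀ b ∈ S, ∀ z ∈ (pth hT a b).support, z ∈ S

lemma sub_inter {hT : T.IsTree} {A B : Set V} (hA : Sub hT A) (hB : Sub hT B)
    (hAB : (A ∩ B).Nonempty) : Sub hT (A ∩ B) := by
  refine ⟨hAB, ?_⟩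
  rintro a ⟨haA, haB⟩ b ⟨hbA, hbB⟩ z hz
  exact ⟨hA.2 a haA b hbA z hz, hB.2 a haB b hbB z hz⟩

lemma helly3 {hT : T.IsTree} {A B C : Set V} (hA : Sub hT A) (hB : Sub hT B)
    (hC : Sub hT C) (hAB : (A ∩ B).Nonempty) (hBC : (B ∩ C).Nonempty)
    (hAC : (A ∩ C).Nonempty) : (A ∩ B ∩ C).Nonempty := by
  obtain ⟨a, haA, haB⟩ := hAB
  obtain ⟨b, hbB, hbC⟩ := hBC
  obtain ⟨c, hcA, hcC⟩ := hAC
  obtain ⟨m, hm1, hm2, hm3⟩ := median hT a b c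
  exact ⟨m, ⟨⟨hA.2 a haA c hcA m hm3, hB.2 a haB b hbB m hm1⟩,
    hC.2 b hbC c hcC m hm2⟩⟩

lemma helly_list {hT : T.IsTree} (v0 : V) :
    ∀ (n : ℕ) (l : List (Set V)), l.length ≤ n →
      (∀ S ∈ l, Sub hT S) → (∀ S ∈ l, ∀ S' ∈ l, (S ∩ S').Nonempty) →
      ∃ v, ∀ S ∈ l, v ∈ S := by
  intro n
  induction n with
  | zero =>
    intro l hl _ _
    rw [Nat.le_zero, List.length_eq_zero_iff] at hl
    subst hl
    exact ⟨v0, by simp⟩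
  | succ n ih =>
    intro l hl hsub hpair
    match l with
    | [] => exact ⟨v0, by simp⟩
    | [S] =>
      obtain ⟨v, hv⟩ := (hsub S (by simp)).1
      exact ⟨v, by simpa using hv⟩
    | S1 :: S2 :: rest =>
      have h12 : (S1 ∩ S2).Nonempty :=
        hpair S1 (by simp) S2 (by simp)
      have hsub' : ∀ S ∈ (S1 ∩ S2) :: rest, Sub hT S := by
        intro S hS
        rcases List.mem_cons.mp hS with rfl | hS
        · exact sub_inter (hsub S1 (by simp)) (hsub S2 (by simp)) h12
        · exact hsub S (by simp [hS])
      have hpair' : ∀ S ∈ (S1 ∩ S2) :: rest, ∀ S' ∈ (S1 ∩ S2) :: rest,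
          (S ∩ S').Nonempty := by
        intro S hS S' hS'
        rcases List.mem_cons.mp hS with rfl | hS <;>
          rcases List.mem_cons.mp hS' with rfl | hS'
        · simpa [Set.inter_assoc] using h12
        · exact helly3 (hsub S1 (by simp)) (hsub S2 (by simp))
            (hsub S' (by simp [hS'])) h12
            (hpair S2 (by simp) S' (by simp [hS']))
            (hpair S1 (by simp) S' (by simp [hS']))
        · rw [Set.inter_comm]
          exact helly3 (hsub S1 (by simp)) (hsub S2 (by simp))
            (hsub S (by simp [hS])) h12
            (hpair S2 (by simp) S (by simp [hS]))
            (hpair S1 (by simp) S (by simp [hS]))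
        · exact hpair S (by simp [hS]) S' (by simp [hS'])
      obtain ⟨v, hv⟩ := ih ((S1 ∩ S2) :: rest) (by simpa using hl) hsub' hpair'
      refine ⟨v, ?_⟩
      intro S hS
      have hv12 : v ∈ S1 ∩ S2 := hv (S1 ∩ S2) List.mem_cons_self
      rcases List.mem_cons.mp hS with rfl | hS
      · exact hv12.1
      rcases List.mem_cons.mp hS with rfl | hS
      · exact hv12.2
      · exact hv S (List.mem_cons_of_mem _ hS)

end TreeFixAux

open TreeFixAux in
/-- A finitely generated group acting without inversions on a tree such that
every element fixes some vertex has a global fixed vertex. -/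
theorem global_fixed_vertex_of_elliptic
    {V G : Type*} [Group G] [MulAction G V]
    (T : SimpleGraph V) (hT : T.IsTree)
    (hact : ∀ (g : G) (u v : V), T.Adj u v → T.Adj (g • u) (g • v))
    (hni : ∀ (g : G) (u v : V), T.Adj u v → ¬ (g • u = v ∧ g • v = u))
    (hfg : Group.FG G)
    (hell : ∀ g : G, ∃ v : V, g • v = v) :
    ∃ v : V, ∀ g : G, g • v = v := by
  obtain ⟨v0, -⟩ := hell 1
  obtain ⟨S, hS⟩ := hfg.out
  -- the list of fixed-point sets of the generators
  set l : List (Set V) := S.toList.map (fun g => {v | g • v = v}) with hl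
  have hsub : ∀ F ∈ l, Sub hT F := by
    intro F hF
    rw [hl, List.mem_map] at hF
    obtain ⟨g, -, rfl⟩ := hF
    exact ⟨hell g, fun a ha b hb z hz => fixed_on_path hT hact g ha hb z hz⟩
  have hpair : ∀ F ∈ l, ∀ F' ∈ l, (F ∩ F').Nonempty := by
    intro F hF F' hF'
    rw [hl, List.mem_map] at hF hF'
    obtain ⟨g, -, rfl⟩ := hF
    obtain ⟨h, -, rfl⟩ := hF'
    obtain ⟨y, hy1, hy2⟩ := pair_fix hT hact g h (hell g) (hell h) (hell (g * h))
    exact ⟨y, hy1, hy2⟩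
  obtain ⟨v, hv⟩ := helly_list (hT := hT) v0 l.length l le_rfl hsub hpair
  have hgen : ∀ g ∈ S, g • v = v := by
    intro g hg
    have hmem : ({x | g • x = x} : Set V) ∈ l := by
      rw [hl, List.mem_map]
      exact ⟨g, Finset.mem_toList.mpr hg, rfl⟩
    exact hv ({x | g • x = x} : Set V) hmem
  refine ⟨v, fun g => ?_⟩
  have hgmem : g ∈ Subgroup.closure (S : Set G) := by
    rw [hS]; exact Subgroup.mem_top g
  refine Subgroup.closure_induction ?_ ?_ ?_ ?_ hgmem
  · intro x hx; exact hgen x hx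
  · exact one_smul G v
  · intro x y _ _ hx hy
    rw [mul_smul, hy, hx]
  · intro x _ hx
    conv_lhs => rw [← hx]
    rw [inv_smul_smul]
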